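/- The annihilator of a finitely generated flat module over a commutative ring is an idempotent ideal. -/
import Mathlib

/-- The annihilator of a finitely generated flat module is an idempotent ideal. -/
theorem annihilator_idempotent_of_fg_flat
    (R M : Type*) [CommRing R] [AddCommGroup M] [Module R M]
    [Module.Finite R M] [Module.Flat R M] :
    Module.annihilator R M * Module.annihilator R M = Module.annihilator R M := by
  apply le_antisymm (Ideal.mul_le_left)
  intro a ha
  -- the ideal `ann(a)`
  set g : R →ₗ[R] R := LinearMap.lsmul R R a with hg
  set Ia : Ideal R := LinearMap.ker g with hIa
  -- Step 1: `M = Ia • M`, using flatness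
  have key : (⊤ : Submodule R M) ≤ Ia • ⊤ := by
    intro x _
    have hexact := Module.Flat.rTensor_exact (R := R) M (LinearMap.exact_subtype_ker_map g)
    have hzero : g.rTensor M ((1 : R) ⊗ₜ[R] x) = 0 := by
      simp only [LinearMap.rTensor_tmul, hg, LinearMap.lsmul_apply, smul_eq_mul, mul_one]
      have : a ⊗ₜ[R] x = (1 : R) ⊗ₜ[R] (a • x) := by
        rw [← mul_one a, ← smul_eq_mul, TensorProduct.smul_tmul]; simp
      rw [this, Module.mem_annihilator.mp ha x, TensorProduct.tmul_zero]
    obtain ⟨t, ht⟩ := (hexact ((1 : R) ⊗ₜ[R] x)).mp hzero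
    have : x = TensorProduct.lid R M ((Ia.subtype).rTensor M t) := by
      rw [ht]; simp
    rw [this]
    clear this ht hzero
    induction t using TensorProduct.induction_on with
    | zero => simp
    | tmul r m =>
        simp only [LinearMap.rTensor_tmul, Submodule.coe_subtype, TensorProduct.lid_tmul]
        exact Submodule.smul_mem_smul r.2 trivial
    | add s t hs ht => simpa using Submodule.add_mem _ hs ht
  -- Step 2: Nakayama-type argument
  obtain ⟨r, hr1, hr2⟩ :=
    Submodule.exists_sub_one_mem_and_smul_eq_zero_of_fg_of_le_smul Ia ⊤
      (Module.Finite.fg_top) key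
  have hrann : r ∈ Module.annihilator R M :=
    Module.mem_annihilator.mpr fun m => hr2 m trivial
  have : a * (r - 1) = 0 := by
    have := hr1
    simp only [hIa, LinearMap.mem_ker, hg, LinearMap.lsmul_apply, smul_eq_mul] at this
    exact this
  have haeq : a = a * r := by linear_combination -this
  rw [haeq]
  exact Ideal.mul_mem_mul ha hrann
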